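/- arXiv:1905.09608 — 4 statements merged into one kernel-verified Lean document; each statement's English description precedes it below -/
import Mathlib

section
/- Let X be a subspace of R^N with orthonormal basis matrix U, and let X1, X2 be subspaces of X that are orthogonal to each other, with orthonormal basis matrices U1 and U2. If Φ is an n×N matrix satisfying 1 − δ < s_min(ΦU)^2 ≤ s_max(ΦU)^2 < 1 + δ for δ ∈ (0,1), then the operator norm of U2^T Φ^T Φ U1 is at most δ. -/
noncomputable section
open scoped RealInnerProductSpace Matrix

/-- The `j`-th column of a matrix, as a vector in Euclidean space. -/
def col {m k : ℕ} (A : Matrix (Fin m) (Fin k) ℝ) (j : Fin k) : EuclideanSpace ℝ (Fin m) :=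
  WithLp.toLp 2 (fun i => A i j)

/-- Orthogonal projection onto a subspace, as an endomorphism. -/
def projE {m : ℕ} (K : Submodule ℝ (EuclideanSpace ℝ (Fin m))) :
    EuclideanSpace ℝ (Fin m) →ₗ[ℝ] EuclideanSpace ℝ (Fin m) :=
  K.subtype ∘ₗ (K.orthogonalProjectionOnto).toLinearMap

/-- Frobenius norm of a real matrix. -/
def frob {m k : ℕ} (A : Matrix (Fin m) (Fin k) ℝ) : ℝ :=
  Real.sqrt (∑ i, ∑ j, (A i j) ^ 2)

/-- Operator (spectral) norm of a real matrix, w.r.t. Euclidean norms. -/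
def opn {m k : ℕ} (A : Matrix (Fin m) (Fin k) ℝ) : ℝ :=
  ‖LinearMap.toContinuousLinearMap (Matrix.toEuclideanLin A)‖


lemma tel_apply {m k : ℕ} (A : Matrix (Fin m) (Fin k) ℝ) (x : EuclideanSpace ℝ (Fin k)) :
    Matrix.toEuclideanLin A x = ∑ j, x j • col A j := by
  ext i
  rw [WithLp.ofLp_sum, Finset.sum_apply]
  simp [Matrix.toEuclideanLin_apply, Matrix.mulVec, dotProduct, col, mul_comm]

lemma tel_mul {m k l : ℕ} (A : Matrix (Fin m) (Fin k) ℝ) (B : Matrix (Fin k) (Fin l) ℝ)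
    (x : EuclideanSpace ℝ (Fin l)) :
    Matrix.toEuclideanLin (A * B) x = Matrix.toEuclideanLin A (Matrix.toEuclideanLin B x) := by
  simp [Matrix.toEuclideanLin_apply, Matrix.mulVec_mulVec]

lemma tel_transpose_inner {m k : ℕ} (A : Matrix (Fin m) (Fin k) ℝ)
    (u : EuclideanSpace ℝ (Fin m)) (w : EuclideanSpace ℝ (Fin k)) :
    ⟪Matrix.toEuclideanLin Aᵀ u, w⟫ = ⟪u, Matrix.toEuclideanLin A w⟫ := by
  have h : Aᵀ = Aᴴ := by ext i j; simp [Matrix.conjTranspose]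
  rw [h, Matrix.toEuclideanLin_conjTranspose_eq_adjoint, LinearMap.adjoint_inner_left]

lemma tel_transpose_inner' {m k : ℕ} (A : Matrix (Fin m) (Fin k) ℝ)
    (u : EuclideanSpace ℝ (Fin k)) (w : EuclideanSpace ℝ (Fin m)) :
    ⟪u, Matrix.toEuclideanLin Aᵀ w⟫ = ⟪Matrix.toEuclideanLin A u, w⟫ := by
  rw [real_inner_comm, tel_transpose_inner, real_inner_comm]

lemma tel_norm {m k : ℕ} {A : Matrix (Fin m) (Fin k) ℝ} (hA : Orthonormal ℝ (col A))
    (x : EuclideanSpace ℝ (Fin k)) : ‖Matrix.toEuclideanLin A x‖ = ‖x‖ := by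
  have h : ⟪Matrix.toEuclideanLin A x, Matrix.toEuclideanLin A x⟫ = ⟪x, x⟫ := by
    rw [tel_apply, hA.inner_sum]
    simp [PiLp.inner_apply, RCLike.inner_apply]
    rw [EuclideanSpace.norm_eq, Real.sq_sqrt (Finset.sum_nonneg fun i _ => sq_nonneg _)]
    simp [sq]
  rw [norm_eq_sqrt_real_inner, h, ← norm_eq_sqrt_real_inner]

lemma tel_mem_span {m k : ℕ} (A : Matrix (Fin m) (Fin k) ℝ) (x : EuclideanSpace ℝ (Fin k)) :
    Matrix.toEuclideanLin A x ∈ Submodule.span ℝ (Set.range (col A)) := by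
  rw [tel_apply]
  exact Submodule.sum_mem _ fun j _ =>
    Submodule.smul_mem _ _ (Submodule.subset_span ⟨j, rfl⟩)

lemma tel_surj {m k : ℕ} (A : Matrix (Fin m) (Fin k) ℝ) (u : EuclideanSpace ℝ (Fin m))
    (hu : u ∈ Submodule.span ℝ (Set.range (col A))) :
    ∃ c : EuclideanSpace ℝ (Fin k), Matrix.toEuclideanLin A c = u := by
  obtain ⟨c, hc⟩ := (Finsupp.mem_span_range_iff_exists_finsupp).1 hu
  refine ⟨WithLp.toLp 2 (fun j => c j), ?_⟩
  rw [tel_apply, ← hc, Finsupp.sum_fintype]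
  intro i; simp


/-- For orthogonal subspaces `X1 ⊥ X2` of `X` on which `Φ` is a near-isometry,
`‖U2ᵀ Φᵀ Φ U1‖ ≤ δ`. -/
theorem cross_term_op_norm_le {N n d d1 d2 : ℕ} (δ : ℝ) (hδ : δ ∈ Set.Ioo (0 : ℝ) 1)
    (X X1 X2 : Submodule ℝ (EuclideanSpace ℝ (Fin N)))
    (hX1 : X1 ≤ X) (hX2 : X2 ≤ X)
    (horth : ∀ u ∈ X1, ∀ v ∈ X2, ⟪u, v⟫ = 0)
    (U : Matrix (Fin N) (Fin d) ℝ)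
    (hU : Orthonormal ℝ (col U)) (hs : Submodule.span ℝ (Set.range (col U)) = X)
    (U1 : Matrix (Fin N) (Fin d1) ℝ) (U2 : Matrix (Fin N) (Fin d2) ℝ)
    (hU1 : Orthonormal ℝ (col U1)) (hs1 : Submodule.span ℝ (Set.range (col U1)) = X1)
    (hU2 : Orthonormal ℝ (col U2)) (hs2 : Submodule.span ℝ (Set.range (col U2)) = X2)
    (Φ : Matrix (Fin n) (Fin N) ℝ)
    (hiso : ∀ x : EuclideanSpace ℝ (Fin d), ‖x‖ = 1 →
      1 - δ < ‖Matrix.toEuclideanLin (Φ * U) x‖ ^ 2 ∧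
      ‖Matrix.toEuclideanLin (Φ * U) x‖ ^ 2 < 1 + δ) :
    opn (U2ᵀ * Φᵀ * Φ * U1) ≤ δ := by
  obtain ⟨hδ0, hδ1⟩ := hδ
  -- key: on vectors of X with ‖v‖² = 2, ‖Φv‖² is between 2(1-δ) and 2(1+δ)
  have key : ∀ v : EuclideanSpace ℝ (Fin N), v ∈ X → ‖v‖ ^ 2 = 2 →
      2 * (1 - δ) < ‖Matrix.toEuclideanLin Φ v‖ ^ 2 ∧
      ‖Matrix.toEuclideanLin Φ v‖ ^ 2 < 2 * (1 + δ) := by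
    intro v hv hv2
    obtain ⟨c, hc⟩ := tel_surj U v (by rw [hs]; exact hv)
    have hcn : ‖c‖ ^ 2 = 2 := by rw [← tel_norm hU c, hc, hv2]
    have hc0 : ‖c‖ ≠ 0 := by
      intro h; rw [h] at hcn; norm_num at hcn
    have hc' : ‖(‖c‖⁻¹ • c : EuclideanSpace ℝ (Fin d))‖ = 1 := by
      rw [norm_smul]; simp [hc0]
    obtain ⟨h1, h2⟩ := hiso (‖c‖⁻¹ • c) hc'
    have he : Matrix.toEuclideanLin (Φ * U) (‖c‖⁻¹ • c)
        = ‖c‖⁻¹ • Matrix.toEuclideanLin Φ v := by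
      rw [map_smul, tel_mul, hc]
    rw [he, norm_smul] at h1 h2
    have hn : ‖(‖c‖⁻¹ : ℝ)‖ = ‖c‖⁻¹ := by
      simp [Real.norm_eq_abs, abs_of_nonneg (inv_nonneg.2 (norm_nonneg c))]
    rw [hn, mul_pow] at h1 h2
    have hinv : (‖c‖⁻¹) ^ 2 = 1 / 2 := by
      rw [inv_pow, hcn]; norm_num
    rw [hinv] at h1 h2
    constructor <;> nlinarith [sq_nonneg ‖Matrix.toEuclideanLin Φ v‖]
  -- main inner-product bound
  have main : ∀ x : EuclideanSpace ℝ (Fin d1), ‖x‖ = 1 →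
      ∀ y : EuclideanSpace ℝ (Fin d2), ‖y‖ = 1 →
      ⟪y, Matrix.toEuclideanLin (U2ᵀ * Φᵀ * Φ * U1) x⟫ ≤ δ := by
    intro x hx y hy
    set u1 := Matrix.toEuclideanLin U1 x with hu1def
    set u2 := Matrix.toEuclideanLin U2 y with hu2def
    have hu1n : ‖u1‖ = 1 := by rw [hu1def, tel_norm hU1, hx]
    have hu2n : ‖u2‖ = 1 := by rw [hu2def, tel_norm hU2, hy]
    have hm1 : u1 ∈ X1 := hs1 ▸ tel_mem_span U1 x
    have hm2 : u2 ∈ X2 := hs2 ▸ tel_mem_span U2 y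
    have hortho : ⟪u1, u2⟫ = 0 := horth _ hm1 _ hm2
    have hortho' : ⟪u2, u1⟫ = 0 := by rw [real_inner_comm]; exact hortho
    have hrw : ⟪y, Matrix.toEuclideanLin (U2ᵀ * Φᵀ * Φ * U1) x⟫
        = ⟪Matrix.toEuclideanLin Φ u2, Matrix.toEuclideanLin Φ u1⟫ := by
      rw [tel_mul, tel_mul, tel_mul, tel_transpose_inner', tel_transpose_inner']
    have hadd : ‖u1 + u2‖ ^ 2 = 2 := by
      rw [norm_add_sq_real, hortho, hu1n, hu2n]; norm_num
    have hsub : ‖u2 - u1‖ ^ 2 = 2 := by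
      rw [norm_sub_sq_real, hortho', hu1n, hu2n]; norm_num
    have k1 := key (u1 + u2) (X.add_mem (hX1 hm1) (hX2 hm2)) hadd
    have k2 := key (u2 - u1) (X.sub_mem (hX2 hm2) (hX1 hm1)) hsub
    have hpol1 := norm_add_sq_real (Matrix.toEuclideanLin Φ u2) (Matrix.toEuclideanLin Φ u1)
    have hpol2 := norm_sub_sq_real (Matrix.toEuclideanLin Φ u2) (Matrix.toEuclideanLin Φ u1)
    have e1 : Matrix.toEuclideanLin Φ u2 + Matrix.toEuclideanLin Φ u1
        = Matrix.toEuclideanLin Φ (u1 + u2) := by rw [map_add, add_comm]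
    have e2 : Matrix.toEuclideanLin Φ u2 - Matrix.toEuclideanLin Φ u1
        = Matrix.toEuclideanLin Φ (u2 - u1) := (map_sub _ _ _).symm
    rw [e1] at hpol1
    rw [e2] at hpol2
    rw [hrw]
    linarith [k1.2, k2.1]
  -- conclude
  unfold opn
  refine ContinuousLinearMap.opNorm_le_bound _ hδ0.le ?_
  intro x
  rw [LinearMap.coe_toContinuousLinearMap']
  rcases eq_or_ne x 0 with rfl | hx0
  · simp
  have hxn : ‖x‖ ≠ 0 := norm_ne_zero_iff.2 hx0
  have hx' : ‖(‖x‖⁻¹ • x : EuclideanSpace ℝ (Fin d1))‖ = 1 := by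
    rw [norm_smul]; simp [hxn]
  set v := Matrix.toEuclideanLin (U2ᵀ * Φᵀ * Φ * U1) (‖x‖⁻¹ • x) with hvdef
  have hvle : ‖v‖ ≤ δ := by
    rcases eq_or_ne v 0 with hv0 | hv0
    · rw [hv0]; simpa using hδ0.le
    have hyn : ‖(‖v‖⁻¹ • v : EuclideanSpace ℝ (Fin d2))‖ = 1 := by
      rw [norm_smul]; simp [norm_ne_zero_iff.2 hv0]
    have := main (‖x‖⁻¹ • x) hx' (‖v‖⁻¹ • v) hyn
    rw [← hvdef, real_inner_smul_left, real_inner_self_eq_norm_sq] at this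
    have hvn : ‖v‖ ≠ 0 := norm_ne_zero_iff.2 hv0
    calc ‖v‖ = ‖v‖⁻¹ * ‖v‖ ^ 2 := by field_simp
    _ ≤ δ := this
  have hfin : Matrix.toEuclideanLin (U2ᵀ * Φᵀ * Φ * U1) x = ‖x‖ • v := by
    rw [hvdef, map_smul, smul_smul]
    field_simp
    rw [one_smul]
  rw [hfin, norm_smul]
  simp only [Real.norm_eq_abs, abs_of_nonneg (norm_nonneg x)]
  calc ‖x‖ * ‖v‖ ≤ ‖x‖ * δ := by
        exact mul_le_mul_of_nonneg_left hvle (norm_nonneg x)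
  _ = δ * ‖x‖ := mul_comm _ _
end
end

section
/- Let X be a subspace of R^N with orthonormal basis U, and let X1, X2 be mutually orthogonal subspaces of X. Suppose Φ ∈ R^{n×N} satisfies 1 − δ < s_min(ΦU)^2 ≤ s_max(ΦU)^2 < 1 + δ with δ ∈ (0,1/4). Then for every nonzero u ∈ X1, ||P_{Y2} Φ u|| ≤ (4/3) · δ · ||Φ u||, where Y2 = ΦX2. -/
set_option maxHeartbeats 1000000

noncomputable section
open scoped RealInnerProductSpace Matrix

/-- For orthogonal subspaces `X1 ⊥ X2` of `X` on which `Φ` is a near-isometry with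
`δ ∈ (0,1/4)`, for nonzero `u ∈ X1`: `‖P_{Y2}Φu‖ ≤ (4/3)·δ·‖Φu‖`. -/
theorem proj_image_orthogonal_le_image_norm {N n d : ℕ} (δ : ℝ)
    (hδ : δ ∈ Set.Ioo (0 : ℝ) (1/4))
    (X X1 X2 : Submodule ℝ (EuclideanSpace ℝ (Fin N)))
    (hX1 : X1 ≤ X) (hX2 : X2 ≤ X)
    (horth : ∀ u ∈ X1, ∀ v ∈ X2, ⟪u, v⟫ = 0)
    (U : Matrix (Fin N) (Fin d) ℝ)
    (hU : Orthonormal ℝ (col U)) (hs : Submodule.span ℝ (Set.range (col U)) = X)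
    (Φ : Matrix (Fin n) (Fin N) ℝ)
    (hiso : ∀ x : EuclideanSpace ℝ (Fin d), ‖x‖ = 1 →
      1 - δ < ‖Matrix.toEuclideanLin (Φ * U) x‖ ^ 2 ∧
      ‖Matrix.toEuclideanLin (Φ * U) x‖ ^ 2 < 1 + δ) :
    ∀ u ∈ X1, u ≠ 0 →
      ‖projE (X2.map (Matrix.toEuclideanLin Φ)) (Matrix.toEuclideanLin Φ u)‖
        ≤ (4/3) * δ * ‖Matrix.toEuclideanLin Φ u‖ := by
  obtain ⟨hδ0, hδ4⟩ := hδ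
  set T := Matrix.toEuclideanLin Φ with hT
  -- Key near-isometry bounds on all of X
  have key : ∀ u ∈ X, (1 - δ) * ‖u‖^2 ≤ ‖T u‖^2 ∧ ‖T u‖^2 ≤ (1 + δ) * ‖u‖^2 := by
    intro u hu
    rw [← hs] at hu
    obtain ⟨c, hc⟩ := (Submodule.mem_span_range_iff_exists_fun ℝ).mp hu
    set x : EuclideanSpace ℝ (Fin d) := WithLp.toLp 2 c with hx
    have hUx : Matrix.toEuclideanLin U x = u := by
      ext i
      rw [← hc, WithLp.ofLp_sum, Finset.sum_apply]
      simp [Matrix.toEuclideanLin_apply, Matrix.mulVec, dotProduct, col, mul_comm, hx]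
    have hcomp : ∀ y : EuclideanSpace ℝ (Fin d),
        Matrix.toEuclideanLin (Φ * U) y = T (Matrix.toEuclideanLin U y) := by
      intro y; simp [Matrix.toEuclideanLin_apply, Matrix.mulVec_mulVec, hT]
    have hnx : ‖x‖ = ‖u‖ := by
      have h1 : ‖u‖^2 = ‖x‖^2 := by
        rw [← real_inner_self_eq_norm_sq, ← hc, hU.inner_sum c c Finset.univ,
          ← real_inner_self_eq_norm_sq]
        rw [hx, real_inner_self_eq_norm_sq, EuclideanSpace.real_norm_sq_eq]
        simp [sq]
      calc ‖x‖ = Real.sqrt (‖x‖^2) := (Real.sqrt_sq (norm_nonneg _)).symm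
        _ = Real.sqrt (‖u‖^2) := by rw [h1]
        _ = ‖u‖ := Real.sqrt_sq (norm_nonneg _)
    by_cases hu0 : u = 0
    · subst hu0; simp
    · have hxn : ‖x‖ ≠ 0 := by rw [hnx]; simpa using hu0
      have hxpos : (0:ℝ) < ‖x‖ := lt_of_le_of_ne (norm_nonneg _) (Ne.symm hxn)
      have hunit : ‖(‖x‖⁻¹ • x : EuclideanSpace ℝ (Fin d))‖ = 1 := by
        rw [norm_smul]; simp [abs_of_pos hxpos, inv_mul_cancel₀ hxn]
      obtain ⟨hlo, hhi⟩ := hiso _ hunit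
      have heq : ‖Matrix.toEuclideanLin (Φ * U) (‖x‖⁻¹ • x)‖ ^ 2
          = ‖T u‖^2 / ‖x‖^2 := by
        rw [map_smul, norm_smul, hcomp, hUx]
        rw [mul_pow]
        simp [abs_of_pos hxpos]
        ring
      rw [heq] at hlo hhi
      have hx2 : (0:ℝ) < ‖x‖^2 := by positivity
      have h1 : (1-δ) * ‖x‖^2 < ‖T u‖^2 := (lt_div_iff₀ hx2).mp hlo
      have h2 : ‖T u‖^2 < (1+δ) * ‖x‖^2 := (div_lt_iff₀ hx2).mp hhi
      rw [hnx] at h1 h2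
      exact ⟨le_of_lt h1, le_of_lt h2⟩
  -- inner product bound for orthogonal vectors
  have hip : ∀ u ∈ X1, ∀ v ∈ X2, ⟪T u, T v⟫ ≤ δ * ‖u‖ * ‖v‖ := by
    have hbase : ∀ u ∈ X1, ∀ v ∈ X2, ⟪T u, T v⟫ ≤ δ * (‖u‖^2 + ‖v‖^2) / 2 := by
      intro u hu v hv
      have huv0 : ⟪u, v⟫ = 0 := horth u hu v hv
      have hado : ‖u + v‖^2 = ‖u‖^2 + ‖v‖^2 := by
        rw [norm_add_sq_real, huv0]; ring
      have hsdo : ‖u - v‖^2 = ‖u‖^2 + ‖v‖^2 := by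
        rw [norm_sub_sq_real, huv0]; ring
      have h1 := (key (u + v) (X.add_mem (hX1 hu) (hX2 hv))).2
      have h2 := (key (u - v) (X.sub_mem (hX1 hu) (hX2 hv))).1
      rw [map_add, norm_add_sq_real (T u) (T v), hado] at h1
      rw [map_sub, norm_sub_sq_real (T u) (T v), hsdo] at h2
      linarith
    intro u hu v hv
    by_cases hu0 : u = 0
    · subst hu0; simp [hδ0.le, mul_nonneg]
    by_cases hv0 : v = 0
    · subst hv0; simp [hδ0.le, mul_nonneg]
    have hupos : (0:ℝ) < ‖u‖ := norm_pos_iff.mpr hu0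
    have hvpos : (0:ℝ) < ‖v‖ := norm_pos_iff.mpr hv0
    have hb := hbase (‖v‖ • u) (X1.smul_mem _ hu) (‖u‖ • v) (X2.smul_mem _ hv)
    rw [map_smul, map_smul, real_inner_smul_left, real_inner_smul_right,
      norm_smul, norm_smul] at hb
    simp only [Real.norm_eq_abs, abs_of_pos hupos, abs_of_pos hvpos, mul_pow] at hb
    nlinarith [hb, mul_pos hupos hvpos]
  -- main argument
  intro u hu hu0
  set K := X2.map T with hK
  set p : EuclideanSpace ℝ (Fin n) := projE K (T u) with hp
  have hpK : p ∈ K := Submodule.coe_mem (K.orthogonalProjectionOnto (T u))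
  obtain ⟨v, hv, hvp⟩ := Submodule.mem_map.mp hpK
  have hyp : ⟪T u, p⟫ = ‖p‖^2 := by
    have h0 : ⟪T u - p, p⟫ = 0 := K.starProjection_inner_eq_zero (T u) p hpK
    have hpc : (↑(K.orthogonalProjectionOnto (T u)) : EuclideanSpace ℝ (Fin n)) = p := rfl
    rw [inner_sub_left] at h0
    rw [← real_inner_self_eq_norm_sq]
    linarith [h0]
  have hb : ‖p‖^2 ≤ δ * ‖u‖ * ‖v‖ := by
    rw [← hyp, ← hvp]; exact hip u hu v hv
  have hKu := (key u (hX1 hu)).1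
  have hKv := (key v (hX2 hv)).1
  rw [hvp] at hKv
  have e2 : ‖u‖^2 ≤ (4/3) * ‖T u‖^2 := by nlinarith [hKu, sq_nonneg ‖u‖]
  have e3 : ‖v‖^2 ≤ (4/3) * ‖p‖^2 := by nlinarith [hKv, sq_nonneg ‖v‖]
  by_cases hp0 : p = 0
  · rw [hp0, norm_zero]; positivity
  have hppos : (0:ℝ) < ‖p‖ := norm_pos_iff.mpr hp0
  have hp2pos : (0:ℝ) < ‖p‖^2 := by positivity
  have e1 : (‖p‖^2)^2 ≤ (δ * ‖u‖ * ‖v‖)^2 :=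
    pow_le_pow_left₀ (sq_nonneg _) hb 2
  have emul : ‖u‖^2 * ‖v‖^2 ≤ ((4/3) * ‖T u‖^2) * ((4/3) * ‖p‖^2) :=
    mul_le_mul e2 e3 (sq_nonneg _) (by positivity)
  have h4 : (‖p‖^2)^2 ≤ δ^2 * ((4/3) * ‖T u‖^2) * ((4/3) * ‖p‖^2) := by
    nlinarith [e1, mul_le_mul_of_nonneg_left emul (sq_nonneg δ)]
  have h5 : ‖p‖^2 ≤ ((4/3) * δ * ‖T u‖)^2 := by nlinarith [h4, hp2pos]
  have hrhs : (0:ℝ) ≤ (4/3) * δ * ‖T u‖ := by positivity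
  nlinarith [h5, norm_nonneg p, hrhs]
end
end

section
/- (Near-isometry implies subspace RIP for distance.) Under the hypotheses of the main theorem (Φ acting as a near-isometry with parameter δ ∈ (0,1/4) on a subspace X containing X1, X2 with dim X1 ≤ dim X2), there is a universal constant C such that |D(Y1,Y2)^2 − D(X1,X2)^2| ≤ C·δ·D(X1,X2)^2, where D denotes the projection Frobenius-norm distance and Y_i = ΦX_i. -/
noncomputable section
open scoped RealInnerProductSpace Matrix

/-- Squared projection Frobenius-norm distance `D(A,B)² = ((1/√2)·‖P_A − P_B‖_F)²`. -/
def Dsq {m : ℕ} (A B : Submodule ℝ (EuclideanSpace ℝ (Fin m))) : ℝ :=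
  ((1 / Real.sqrt 2) * frob (LinearMap.toMatrix
    (EuclideanSpace.basisFun (Fin m) ℝ).toBasis (EuclideanSpace.basisFun (Fin m) ℝ).toBasis
    (projE A - projE B))) ^ 2

/-! ### Auxiliary lemmas -/

section Aux

variable {m : ℕ}

lemma projE_mem (K : Submodule ℝ (EuclideanSpace ℝ (Fin m))) (x : EuclideanSpace ℝ (Fin m)) :
    projE K x ∈ K := (K.orthogonalProjectionOnto x).2

lemma sub_projE_inner (K : Submodule ℝ (EuclideanSpace ℝ (Fin m))) (x : EuclideanSpace ℝ (Fin m))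
    {w} (hw : w ∈ K) : ⟪x - projE K x, w⟫ = 0 :=
  K.starProjection_inner_eq_zero x w hw

lemma projE_min (K : Submodule ℝ (EuclideanSpace ℝ (Fin m))) (x : EuclideanSpace ℝ (Fin m))
    {w} (hw : w ∈ K) : ‖x - projE K x‖ ≤ ‖x - w‖ := by
  have hdec : x - w = (x - projE K x) + (projE K x - w) := by abel
  have horth : ⟪x - projE K x, projE K x - w⟫ = 0 :=
    sub_projE_inner K x (K.sub_mem (projE_mem K x) hw)
  have : ‖x - w‖ ^ 2 = ‖x - projE K x‖ ^ 2 + ‖projE K x - w‖ ^ 2 := by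
    rw [hdec, norm_add_sq_real, horth]; ring
  nlinarith [norm_nonneg (x - w), norm_nonneg (x - projE K x), sq_nonneg ‖projE K x - w‖]

lemma inner_projE_self (K : Submodule ℝ (EuclideanSpace ℝ (Fin m))) (x : EuclideanSpace ℝ (Fin m)) :
    ⟪x, projE K x⟫ = ‖projE K x‖ ^ 2 := by
  have h := sub_projE_inner K x (projE_mem K x)
  rw [inner_sub_left] at h
  have : ⟪x, projE K x⟫ = ⟪projE K x, projE K x⟫ := by linarith
  rw [this, real_inner_self_eq_norm_sq]

/-- expansion in an orthonormal family -/
lemma onb_expansion {k : ℕ} {a : Fin k → EuclideanSpace ℝ (Fin m)} (ha : Orthonormal ℝ a)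
    {x : EuclideanSpace ℝ (Fin m)} (hx : x ∈ Submodule.span ℝ (Set.range a)) :
    x = ∑ i, ⟪a i, x⟫ • a i := by
  obtain ⟨c, rfl⟩ := (Submodule.mem_span_range_iff_exists_fun ℝ).1 hx
  have : ∀ i, ⟪a i, ∑ j, c j • a j⟫ = c i := by
    intro i
    rw [inner_sum]
    simp [inner_smul_right, orthonormal_iff_ite.mp ha]
  simp_rw [this]

lemma projE_eq_sum {k : ℕ} {a : Fin k → EuclideanSpace ℝ (Fin m)} (ha : Orthonormal ℝ a)
    {K : Submodule ℝ (EuclideanSpace ℝ (Fin m))} (hK : Submodule.span ℝ (Set.range a) = K)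
    (x : EuclideanSpace ℝ (Fin m)) :
    projE K x = ∑ i, ⟪a i, x⟫ • a i := by
  have hmem : projE K x ∈ Submodule.span ℝ (Set.range a) := hK ▸ projE_mem K x
  have h1 := onb_expansion ha hmem
  have h2 : ∀ i, ⟪a i, projE K x⟫ = ⟪a i, x⟫ := by
    intro i
    have hai : a i ∈ K := hK ▸ Submodule.subset_span (Set.mem_range_self i)
    have := sub_projE_inner K x hai
    rw [inner_sub_left] at this
    have e1 : ⟪a i, projE K x⟫ = ⟪projE K x, a i⟫ := real_inner_comm _ _
    have e2 : ⟪a i, x⟫ = ⟪x, a i⟫ := real_inner_comm _ _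
    rw [e1, e2]; linarith
  rw [h1]; simp_rw [h2]

lemma euc_inner_eq (x y : EuclideanSpace ℝ (Fin m)) : ⟪x, y⟫ = ∑ t, x t * y t := by
  simp [PiLp.inner_apply]
  exact Finset.sum_congr rfl fun _ _ => mul_comm _ _

lemma euc_norm_sq (x : EuclideanSpace ℝ (Fin m)) : ‖x‖ ^ 2 = ∑ t, (x t) ^ 2 := by
  rw [← real_inner_self_eq_norm_sq, euc_inner_eq]
  simp [sq]

lemma euc_sum_apply {ι : Type*} (s : Finset ι) (f : ι → EuclideanSpace ℝ (Fin m)) (t : Fin m) :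
    (∑ i ∈ s, f i) t = ∑ i ∈ s, f i t := by
  induction s using Finset.cons_induction with
  | empty => rfl
  | cons a s ha ih => rw [Finset.sum_cons, Finset.sum_cons, ← ih]; rfl

lemma euc_smul_apply (c : ℝ) (x : EuclideanSpace ℝ (Fin m)) (t : Fin m) : (c • x) t = c * x t := rfl

lemma euc_single_inner (t : Fin m) (x : EuclideanSpace ℝ (Fin m)) :
    ⟪x, EuclideanSpace.single t (1:ℝ)⟫ = x t := by
  simp [EuclideanSpace.inner_single_right]

lemma toMatrix_entry (f : EuclideanSpace ℝ (Fin m) →ₗ[ℝ] EuclideanSpace ℝ (Fin m)) (i j : Fin m) :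
    (LinearMap.toMatrix (EuclideanSpace.basisFun (Fin m) ℝ).toBasis
      (EuclideanSpace.basisFun (Fin m) ℝ).toBasis f) i j
      = f (EuclideanSpace.single j (1:ℝ)) i := by
  rw [LinearMap.toMatrix_apply]
  rw [OrthonormalBasis.coe_toBasis_repr_apply, EuclideanSpace.basisFun_repr,
    OrthonormalBasis.coe_toBasis, EuclideanSpace.basisFun_apply]

lemma projE_norm_sq {k : ℕ} {a : Fin k → EuclideanSpace ℝ (Fin m)} (ha : Orthonormal ℝ a)
    {K : Submodule ℝ (EuclideanSpace ℝ (Fin m))} (hK : Submodule.span ℝ (Set.range a) = K)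
    (x : EuclideanSpace ℝ (Fin m)) :
    ‖projE K x‖ ^ 2 = ∑ i, ⟪a i, x⟫ ^ 2 := by
  rw [← real_inner_self_eq_norm_sq, projE_eq_sum ha hK, ha.inner_sum]
  simp [sq]

lemma projE_inner_projE {p q : ℕ} {a : Fin p → EuclideanSpace ℝ (Fin m)}
    {b : Fin q → EuclideanSpace ℝ (Fin m)} (ha : Orthonormal ℝ a) (hb : Orthonormal ℝ b)
    {A B : Submodule ℝ (EuclideanSpace ℝ (Fin m))}
    (hA : Submodule.span ℝ (Set.range a) = A) (hB : Submodule.span ℝ (Set.range b) = B)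
    (x : EuclideanSpace ℝ (Fin m)) :
    ⟪projE A x, projE B x⟫ = ∑ i, ∑ k, ⟪a i, x⟫ * ⟪b k, x⟫ * ⟪a i, b k⟫ := by
  rw [projE_eq_sum ha hA, projE_eq_sum hb hB, sum_inner]
  refine Finset.sum_congr rfl fun i _ => ?_
  rw [inner_sum]
  refine Finset.sum_congr rfl fun k _ => ?_
  rw [real_inner_smul_left, real_inner_smul_right]; ring

/-- The fundamental formula for `Dsq` in terms of orthonormal spanning families. -/
lemma Dsq_eq {p q : ℕ} {A B : Submodule ℝ (EuclideanSpace ℝ (Fin m))}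
    {a : Fin p → EuclideanSpace ℝ (Fin m)} {b : Fin q → EuclideanSpace ℝ (Fin m)}
    (ha : Orthonormal ℝ a) (hA : Submodule.span ℝ (Set.range a) = A)
    (hb : Orthonormal ℝ b) (hB : Submodule.span ℝ (Set.range b) = B) :
    Dsq A B = (∑ i, ‖a i - projE B (a i)‖ ^ 2) + ((q : ℝ) - p)/2 := by
  classical
  set M := LinearMap.toMatrix (EuclideanSpace.basisFun (Fin m) ℝ).toBasis
    (EuclideanSpace.basisFun (Fin m) ℝ).toBasis (projE A - projE B) with hM
  set t : ℝ := ∑ i, ∑ j, (M i j) ^ 2 with ht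
  have htnn : 0 ≤ t := Finset.sum_nonneg fun i _ => Finset.sum_nonneg fun j _ => sq_nonneg _
  set g : ℝ := ∑ i, ∑ k, ⟪a i, b k⟫ ^ 2 with hg
  have ht2 : t = ∑ j, ‖projE A (EuclideanSpace.single j (1:ℝ))
      - projE B (EuclideanSpace.single j (1:ℝ))‖ ^ 2 := by
    rw [ht, Finset.sum_comm]
    refine Finset.sum_congr rfl fun j _ => ?_
    rw [euc_norm_sq]
    refine Finset.sum_congr rfl fun i _ => ?_
    rw [hM, toMatrix_entry]
    rfl
  have hS1 : ∑ j, ‖projE A (EuclideanSpace.single j (1:ℝ))‖ ^ 2 = (p : ℝ) := by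
    have : ∀ j, ‖projE A (EuclideanSpace.single j (1:ℝ))‖ ^ 2
        = ∑ i, ⟪a i, EuclideanSpace.single j (1:ℝ)⟫ ^ 2 := fun j => projE_norm_sq ha hA _
    simp_rw [this, euc_single_inner]
    rw [Finset.sum_comm]
    have : ∀ i, ∑ j, (a i) j ^ 2 = 1 := by
      intro i
      rw [← euc_norm_sq, ha.1 i]; norm_num
    simp [this]
  have hS2 : ∑ j, ‖projE B (EuclideanSpace.single j (1:ℝ))‖ ^ 2 = (q : ℝ) := by
    have : ∀ j, ‖projE B (EuclideanSpace.single j (1:ℝ))‖ ^ 2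
        = ∑ k, ⟪b k, EuclideanSpace.single j (1:ℝ)⟫ ^ 2 := fun j => projE_norm_sq hb hB _
    simp_rw [this, euc_single_inner]
    rw [Finset.sum_comm]
    have : ∀ k, ∑ j, (b k) j ^ 2 = 1 := by
      intro k
      rw [← euc_norm_sq, hb.1 k]; norm_num
    simp [this]
  have hS3 : ∑ j, ⟪projE A (EuclideanSpace.single j (1:ℝ)),
      projE B (EuclideanSpace.single j (1:ℝ))⟫ = g := by
    have : ∀ j, ⟪projE A (EuclideanSpace.single j (1:ℝ)), projE B (EuclideanSpace.single j (1:ℝ))⟫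
        = ∑ i, ∑ k, (a i) j * (b k) j * ⟪a i, b k⟫ := by
      intro j
      rw [projE_inner_projE ha hb hA hB]
      simp_rw [euc_single_inner]
    simp_rw [this]
    rw [Finset.sum_comm]
    refine Finset.sum_congr rfl fun i _ => ?_
    rw [Finset.sum_comm]
    refine Finset.sum_congr rfl fun k _ => ?_
    rw [← Finset.sum_mul, ← euc_inner_eq, sq]
  have htval : t = (p : ℝ) + q - 2 * g := by
    rw [ht2]
    have : ∀ j, ‖projE A (EuclideanSpace.single j (1:ℝ))
        - projE B (EuclideanSpace.single j (1:ℝ))‖ ^ 2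
        = ‖projE A (EuclideanSpace.single j (1:ℝ))‖ ^ 2
          - 2 * ⟪projE A (EuclideanSpace.single j (1:ℝ)), projE B (EuclideanSpace.single j (1:ℝ))⟫
          + ‖projE B (EuclideanSpace.single j (1:ℝ))‖ ^ 2 := fun j => norm_sub_sq_real _ _
    simp_rw [this]
    rw [Finset.sum_add_distrib, Finset.sum_sub_distrib, hS1, hS2, ← Finset.mul_sum, hS3]
    ring
  have hh : (∑ i, ‖a i - projE B (a i)‖ ^ 2) = (p : ℝ) - g := by
    have : ∀ i, ‖a i - projE B (a i)‖ ^ 2 = 1 - ∑ k, ⟪b k, a i⟫ ^ 2 := by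
      intro i
      rw [norm_sub_sq_real, inner_projE_self, projE_norm_sq hb hB, ha.1 i]
      ring
    simp_rw [this]
    rw [Finset.sum_sub_distrib]
    simp only [Finset.sum_const, Finset.card_univ, Fintype.card_fin, nsmul_eq_mul, mul_one]
    rw [hg]
    congr 1
    refine Finset.sum_congr rfl fun i _ => Finset.sum_congr rfl fun k _ => ?_
    rw [real_inner_comm]
  have hfrob : frob M = Real.sqrt t := rfl
  rw [Dsq, ← hM, hfrob, mul_pow, Real.sq_sqrt htnn, div_pow, one_pow,
    Real.sq_sqrt (by norm_num : (0:ℝ) ≤ 2), htval, hh]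
  ring

/-- The key comparison lemma. -/
lemma key {N n : ℕ} (T : EuclideanSpace ℝ (Fin N) →ₗ[ℝ] EuclideanSpace ℝ (Fin n))
    {X X1 X2 : Submodule ℝ (EuclideanSpace ℝ (Fin N))} (h1 : X1 ≤ X) (h2 : X2 ≤ X)
    {α β : ℝ} (hα : 0 < α) (hβ : 0 ≤ β)
    (hlow : ∀ x ∈ X, α * ‖x‖ ≤ ‖T x‖) (hup : ∀ x ∈ X, ‖T x‖ ≤ β * ‖x‖)
    {p k : ℕ} {u : Fin p → EuclideanSpace ℝ (Fin N)}
    (hu : Orthonormal ℝ u) (huspan : Submodule.span ℝ (Set.range u) = X1)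
    {y : Fin k → EuclideanSpace ℝ (Fin n)}
    (hy : Orthonormal ℝ y) (hyspan : Submodule.span ℝ (Set.range y) = X1.map T) :
    α ^ 2 * ∑ j, ‖y j - projE (X2.map T) (y j)‖ ^ 2
      ≤ β ^ 2 * ∑ i, ‖u i - projE X2 (u i)‖ ^ 2 := by
  classical
  have hymem : ∀ j, y j ∈ X1.map T := fun j =>
    hyspan ▸ Submodule.subset_span (Set.mem_range_self j)
  choose v hv1 hv2 using fun j => Submodule.mem_map.mp (hymem j)
  set L : EuclideanSpace ℝ (Fin N) →ₗ[ℝ] EuclideanSpace ℝ (Fin N) :=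
    LinearMap.id - projE X2 with hL
  have hLapp : ∀ x, L x = x - projE X2 x := fun x => rfl
  have subclaim : ∀ w ∈ X1, α ^ 2 * ∑ j, ⟪w, v j⟫ ^ 2 ≤ ‖w‖ ^ 2 := by
    intro w hw
    set s : ℝ := ∑ j, ⟪w, v j⟫ ^ 2 with hs
    have snn : 0 ≤ s := Finset.sum_nonneg fun j _ => sq_nonneg _
    set q : EuclideanSpace ℝ (Fin N) := ∑ j, ⟪w, v j⟫ • v j with hq
    have hqmem : q ∈ X := Submodule.sum_mem X fun j _ =>
      Submodule.smul_mem X _ (h1 (hv1 j))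
    have hwq : ⟪w, q⟫ = s := by
      rw [hq, inner_sum]
      refine Finset.sum_congr rfl fun j _ => ?_
      rw [real_inner_smul_right, sq]
    have hTq : T q = ∑ j, ⟪w, v j⟫ • y j := by
      rw [hq, map_sum]
      refine Finset.sum_congr rfl fun j _ => ?_
      rw [map_smul, hv2]
    have hTqn : ‖T q‖ ^ 2 = s := by
      rw [← real_inner_self_eq_norm_sq, hTq, hy.inner_sum]
      simp [hs, sq]
    have hl := hlow q hqmem
    have hiw : s ≤ ‖w‖ * ‖q‖ := hwq ▸ real_inner_le_norm w q
    rcases eq_or_lt_of_le snn with hs0 | hs0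
    · rw [← hs0, mul_zero]; exact sq_nonneg _
    · have hsq := mul_self_le_mul_self (by positivity : (0:ℝ) ≤ α * ‖q‖) hl
      have h1' : α ^ 2 * ‖q‖ ^ 2 ≤ s := by nlinarith [hsq, hTqn]
      have e1 : s * s ≤ (‖w‖ * ‖q‖) * (‖w‖ * ‖q‖) := mul_self_le_mul_self snn hiw
      have e2 : α ^ 2 * (s * s) ≤ α ^ 2 * ((‖w‖ * ‖q‖) * (‖w‖ * ‖q‖)) :=
        mul_le_mul_of_nonneg_left e1 (sq_nonneg α)
      have e3 : ‖w‖ ^ 2 * (α ^ 2 * ‖q‖ ^ 2) ≤ ‖w‖ ^ 2 * s :=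
        mul_le_mul_of_nonneg_left h1' (sq_nonneg ‖w‖)
      have h2' : α ^ 2 * s ^ 2 ≤ ‖w‖ ^ 2 * s := by
        calc α ^ 2 * s ^ 2 = α ^ 2 * (s * s) := by ring
          _ ≤ α ^ 2 * ((‖w‖ * ‖q‖) * (‖w‖ * ‖q‖)) := e2
          _ = ‖w‖ ^ 2 * (α ^ 2 * ‖q‖ ^ 2) := by ring
          _ ≤ ‖w‖ ^ 2 * s := e3
      nlinarith [h2', hs0]
  have crux : α ^ 2 * ∑ j, ‖L (v j)‖ ^ 2 ≤ ∑ i, ‖L (u i)‖ ^ 2 := by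
    have vexp : ∀ j, v j = ∑ i, ⟪u i, v j⟫ • u i := fun j =>
      onb_expansion hu (huspan ▸ hv1 j)
    have Lvapp : ∀ j t, (L (v j)) t = ∑ i, ⟪u i, v j⟫ * (L (u i)) t := by
      intro j t
      conv_lhs => rw [vexp j]
      rw [map_sum, euc_sum_apply]
      refine Finset.sum_congr rfl fun i _ => ?_
      rw [map_smul, euc_smul_apply]
    have main : ∀ t : Fin N, α ^ 2 * ∑ j, ((L (v j)) t) ^ 2 ≤ ∑ i, ((L (u i)) t) ^ 2 := by
      intro t
      set w : EuclideanSpace ℝ (Fin N) := ∑ i, ((L (u i)) t) • u i with hw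
      have hwmem : w ∈ X1 := huspan ▸ Submodule.sum_mem _ fun i _ =>
        Submodule.smul_mem _ _ (Submodule.subset_span (Set.mem_range_self i))
      have hwv : ∀ j, ⟪w, v j⟫ = (L (v j)) t := by
        intro j
        rw [hw, sum_inner, Lvapp]
        refine Finset.sum_congr rfl fun i _ => ?_
        rw [real_inner_smul_left]; ring
      have hwn : ‖w‖ ^ 2 = ∑ i, ((L (u i)) t) ^ 2 := by
        rw [← real_inner_self_eq_norm_sq, hw, hu.inner_sum]
        simp [sq]
      have := subclaim w hwmem
      simp_rw [hwv] at this
      rw [hwn] at this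
      exact this
    calc α ^ 2 * ∑ j, ‖L (v j)‖ ^ 2 = ∑ t, α ^ 2 * ∑ j, ((L (v j)) t) ^ 2 := by
          simp_rw [euc_norm_sq]
          rw [Finset.sum_comm, Finset.mul_sum]
      _ ≤ ∑ t, ∑ i, ((L (u i)) t) ^ 2 := Finset.sum_le_sum fun t _ => main t
      _ = ∑ i, ‖L (u i)‖ ^ 2 := by
          rw [Finset.sum_comm]
          simp_rw [euc_norm_sq]
  have dist_bound : ∀ j, ‖y j - projE (X2.map T) (y j)‖ ^ 2 ≤ β ^ 2 * ‖L (v j)‖ ^ 2 := by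
    intro j
    have hmemY2 : T (projE X2 (v j)) ∈ X2.map T :=
      Submodule.mem_map_of_mem (projE_mem X2 (v j))
    have step1 : ‖y j - projE (X2.map T) (y j)‖ ≤ ‖y j - T (projE X2 (v j))‖ :=
      projE_min _ _ hmemY2
    have step2 : y j - T (projE X2 (v j)) = T (L (v j)) := by
      rw [hLapp, map_sub, hv2]
    have hmemX : L (v j) ∈ X := by
      rw [hLapp]
      exact X.sub_mem (h1 (hv1 j)) (h2 (projE_mem X2 (v j)))
    have step3 : ‖y j - T (projE X2 (v j))‖ ≤ β * ‖L (v j)‖ := by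
      rw [step2]; exact hup _ hmemX
    have h := le_trans step1 step3
    have := pow_le_pow_left₀ (norm_nonneg _) h 2
    rwa [mul_pow] at this
  calc α ^ 2 * ∑ j, ‖y j - projE (X2.map T) (y j)‖ ^ 2
      ≤ α ^ 2 * ∑ j, β ^ 2 * ‖L (v j)‖ ^ 2 := by
        apply mul_le_mul_of_nonneg_left (Finset.sum_le_sum fun j _ => dist_bound j) (sq_nonneg α)
    _ = β ^ 2 * (α ^ 2 * ∑ j, ‖L (v j)‖ ^ 2) := by
        rw [← Finset.mul_sum]; ring
    _ ≤ β ^ 2 * ∑ i, ‖L (u i)‖ ^ 2 := mul_le_mul_of_nonneg_left crux (sq_nonneg β)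
    _ = β ^ 2 * ∑ i, ‖u i - projE X2 (u i)‖ ^ 2 := by simp_rw [hLapp]

lemma exists_onb (A : Submodule ℝ (EuclideanSpace ℝ (Fin m))) :
    ∃ a : Fin (Module.finrank ℝ A) → EuclideanSpace ℝ (Fin m),
      Orthonormal ℝ a ∧ Submodule.span ℝ (Set.range a) = A := by
  have b := stdOrthonormalBasis ℝ A
  refine ⟨fun i => (b i : EuclideanSpace ℝ (Fin m)), ⟨fun i => ?_, fun i j hij => ?_⟩, ?_⟩
  · rw [Submodule.norm_coe]; exact b.orthonormal.1 i
  · simpa [Submodule.coe_inner] using b.orthonormal.2 hij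
  · have h0 : Set.range (fun i => (b i : EuclideanSpace ℝ (Fin m))) = A.subtype '' Set.range b := by
      rw [← Set.range_comp]; rfl
    have hsp : Submodule.span ℝ (Set.range (⇑b)) = (⊤ : Submodule ℝ A) := by
      rw [← b.coe_toBasis, b.toBasis.span_eq]
    rw [h0, Submodule.span_image, hsp, Submodule.map_top, Submodule.range_subtype]

lemma finrank_map_eq' {N n : ℕ} (T : EuclideanSpace ℝ (Fin N) →ₗ[ℝ] EuclideanSpace ℝ (Fin n))
    (A : Submodule ℝ (EuclideanSpace ℝ (Fin N))) (hinj : ∀ x ∈ A, T x = 0 → x = 0) :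
    Module.finrank ℝ (A.map T) = Module.finrank ℝ A := by
  have hsurj := T.submoduleMap_surjective A
  have hinj' : Function.Injective (T.submoduleMap A) := by
    rw [injective_iff_map_eq_zero]
    intro x hx
    have : T (x : EuclideanSpace ℝ (Fin N)) = 0 := by
      have := congrArg (Subtype.val) hx
      rwa [LinearMap.submoduleMap_coe_apply] at this
    exact Subtype.ext (hinj x x.2 this)
  exact (LinearEquiv.ofBijective (T.submoduleMap A) ⟨hinj', hsurj⟩).finrank_eq.symm

lemma le_of_sq_le_sq' {a b : ℝ} (ha : 0 ≤ a) (hb : 0 ≤ b) (h : a ^ 2 ≤ b ^ 2) : a ≤ b := by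
  have := Real.sqrt_le_sqrt h
  rwa [Real.sqrt_sq ha, Real.sqrt_sq hb] at this

lemma bounds_from_hyp {N n d : ℕ} {δ : ℝ} (hδ0 : 0 < δ) (hδ1 : δ < 1)
    {X : Submodule ℝ (EuclideanSpace ℝ (Fin N))}
    (U : Matrix (Fin N) (Fin d) ℝ) (hU : Orthonormal ℝ (col U))
    (hspan : Submodule.span ℝ (Set.range (col U)) = X)
    (Φ : Matrix (Fin n) (Fin N) ℝ)
    (H : ∀ x : EuclideanSpace ℝ (Fin d), ‖x‖ = 1 →
      1 - δ < ‖Matrix.toEuclideanLin (Φ * U) x‖ ^ 2 ∧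
      ‖Matrix.toEuclideanLin (Φ * U) x‖ ^ 2 < 1 + δ) :
    ∀ v ∈ X, Real.sqrt (1-δ) * ‖v‖ ≤ ‖Matrix.toEuclideanLin Φ v‖ ∧
      ‖Matrix.toEuclideanLin Φ v‖ ≤ Real.sqrt (1+δ) * ‖v‖ := by
  have Hs : ∀ c : EuclideanSpace ℝ (Fin d),
      (1 - δ) * ‖c‖ ^ 2 ≤ ‖Matrix.toEuclideanLin (Φ * U) c‖ ^ 2 ∧
      ‖Matrix.toEuclideanLin (Φ * U) c‖ ^ 2 ≤ (1 + δ) * ‖c‖ ^ 2 := by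
    intro c
    rcases eq_or_ne c 0 with rfl | hc
    · simp
    · have hcn : (0:ℝ) < ‖c‖ := norm_pos_iff.mpr hc
      set c' : EuclideanSpace ℝ (Fin d) := ‖c‖⁻¹ • c with hc'
      have hcn1 : ‖c'‖ = 1 := by
        rw [hc', norm_smul, norm_inv, norm_norm, inv_mul_cancel₀ hcn.ne']
      obtain ⟨hl, hr⟩ := H c' hcn1
      have happ : ‖Matrix.toEuclideanLin (Φ * U) c'‖ ^ 2
          = ‖c‖⁻¹ ^ 2 * ‖Matrix.toEuclideanLin (Φ * U) c‖ ^ 2 := by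
        rw [hc', map_smul, norm_smul, norm_inv, norm_norm, mul_pow]
      rw [happ] at hl hr
      constructor
      · have := mul_le_mul_of_nonneg_left hl.le (sq_nonneg ‖c‖)
        have hinv : ‖c‖ ^ 2 * (‖c‖⁻¹ ^ 2 * ‖Matrix.toEuclideanLin (Φ * U) c‖ ^ 2)
            = ‖Matrix.toEuclideanLin (Φ * U) c‖ ^ 2 := by
          field_simp
        nlinarith [this, hinv]
      · have := mul_le_mul_of_nonneg_left hr.le (sq_nonneg ‖c‖)
        have hinv : ‖c‖ ^ 2 * (‖c‖⁻¹ ^ 2 * ‖Matrix.toEuclideanLin (Φ * U) c‖ ^ 2)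
            = ‖Matrix.toEuclideanLin (Φ * U) c‖ ^ 2 := by
          field_simp
        nlinarith [this, hinv]
  have hcomp : ∀ c : EuclideanSpace ℝ (Fin d),
      Matrix.toEuclideanLin (Φ * U) c = Matrix.toEuclideanLin Φ (Matrix.toEuclideanLin U c) := by
    intro c
    rw [Matrix.toEuclideanLin_eq_toLin_orthonormal,
      Matrix.toLin_mul _ ((EuclideanSpace.basisFun (Fin N) ℝ).toBasis),
      ← Matrix.toEuclideanLin_eq_toLin_orthonormal, ← Matrix.toEuclideanLin_eq_toLin_orthonormal]
    rfl
  intro v hv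
  rw [← hspan] at hv
  obtain ⟨c, rfl⟩ := (Submodule.mem_span_range_iff_exists_fun ℝ).1 hv
  set ce : EuclideanSpace ℝ (Fin d) := (WithLp.equiv 2 (Fin d → ℝ)).symm c with hce
  have hUc : Matrix.toEuclideanLin U ce = ∑ j, c j • col U j := by
    rw [hce]
    ext t
    have : (Matrix.toEuclideanLin U ((WithLp.equiv 2 (Fin d → ℝ)).symm c)) t = ∑ j, U t j * c j := rfl
    rw [this, euc_sum_apply]
    exact Finset.sum_congr rfl fun j _ => (mul_comm _ _)
  have hnorm : ‖(∑ j, c j • col U j : EuclideanSpace ℝ (Fin N))‖ ^ 2 = ‖ce‖ ^ 2 := by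
    rw [← real_inner_self_eq_norm_sq, hU.inner_sum, euc_norm_sq]
    simp [hce, sq]
  have hTv : Matrix.toEuclideanLin Φ (∑ j, c j • col U j) = Matrix.toEuclideanLin (Φ * U) ce := by
    rw [hcomp, hUc]
  obtain ⟨hl, hr⟩ := Hs ce
  rw [← hTv, ← hnorm] at hl hr
  constructor
  · refine le_of_sq_le_sq' ?_ (norm_nonneg _) ?_
    · positivity
    · rw [mul_pow, Real.sq_sqrt (by linarith : (0:ℝ) ≤ 1 - δ)]
      exact hl
  · refine le_of_sq_le_sq' (norm_nonneg _) ?_ ?_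
    · positivity
    · rw [mul_pow, Real.sq_sqrt (by linarith : (0:ℝ) ≤ 1 + δ)]
      exact hr

lemma exists_inverse {N n : ℕ} (T : EuclideanSpace ℝ (Fin N) →ₗ[ℝ] EuclideanSpace ℝ (Fin n))
    {X : Submodule ℝ (EuclideanSpace ℝ (Fin N))} {α : ℝ} (hα : 0 < α)
    (hlow : ∀ x ∈ X, α * ‖x‖ ≤ ‖T x‖) :
    ∃ S : EuclideanSpace ℝ (Fin n) →ₗ[ℝ] EuclideanSpace ℝ (Fin N),
      ∀ x ∈ X, S (T x) = x := by
  have hinj : Function.Injective (T.submoduleMap X) := by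
    rw [injective_iff_map_eq_zero]
    intro x hx
    have hTx : T (x : EuclideanSpace ℝ (Fin N)) = 0 := by
      have := congrArg (Subtype.val) hx
      rwa [LinearMap.submoduleMap_coe_apply] at this
    have := hlow x x.2
    rw [hTx, norm_zero] at this
    have : ‖(x : EuclideanSpace ℝ (Fin N))‖ ≤ 0 := by
      nlinarith [norm_nonneg (x : EuclideanSpace ℝ (Fin N))]
    exact Subtype.ext (norm_le_zero_iff.mp this)
  set e := LinearEquiv.ofBijective (T.submoduleMap X) ⟨hinj, T.submoduleMap_surjective X⟩ with he
  refine ⟨X.subtype ∘ₗ (e.symm : (X.map T) →ₗ[ℝ] X) ∘ₗ ((X.map T).orthogonalProjectionOnto).toLinearMap,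
    fun x hx => ?_⟩
  have hTxmem : T x ∈ X.map T := Submodule.mem_map_of_mem hx
  have hproj : (X.map T).orthogonalProjectionOnto (T x) = ⟨T x, hTxmem⟩ := by
    exact Subtype.ext (Submodule.starProjection_eq_self_iff.mpr hTxmem)
  have hesymm : e.symm ⟨T x, hTxmem⟩ = ⟨x, hx⟩ := by
    rw [LinearEquiv.symm_apply_eq]
    exact Subtype.ext (LinearMap.submoduleMap_coe_apply T ⟨x, hx⟩).symm
  simp only [LinearMap.coe_comp, Function.comp_apply, ContinuousLinearMap.coe_coe, hproj]
  exact congrArg X.subtype hesymm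

end Aux

set_option maxHeartbeats 2000000 in
/-- Near-isometry implies subspace RIP for the projection Frobenius-norm distance. -/
theorem near_isometry_implies_subspace_RIP_dist :
    ∃ C : ℝ, 0 < C ∧
      ∀ (N n d d1 d2 : ℕ) (δ : ℝ), δ ∈ Set.Ioo (0 : ℝ) (1/4) →
      ∀ (X X1 X2 : Submodule ℝ (EuclideanSpace ℝ (Fin N))), X1 ≤ X → X2 ≤ X →
        Module.finrank ℝ X = d → Module.finrank ℝ X1 = d1 → Module.finrank ℝ X2 = d2 →
        d1 ≤ d2 →
      ∀ (U : Matrix (Fin N) (Fin d) ℝ),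
        Orthonormal ℝ (col U) → Submodule.span ℝ (Set.range (col U)) = X →
      ∀ (Φ : Matrix (Fin n) (Fin N) ℝ),
        (∀ x : EuclideanSpace ℝ (Fin d), ‖x‖ = 1 →
          1 - δ < ‖Matrix.toEuclideanLin (Φ * U) x‖ ^ 2 ∧
          ‖Matrix.toEuclideanLin (Φ * U) x‖ ^ 2 < 1 + δ) →
        |Dsq (X1.map (Matrix.toEuclideanLin Φ)) (X2.map (Matrix.toEuclideanLin Φ))
          - Dsq X1 X2| ≤ C * δ * Dsq X1 X2 := by
  refine ⟨5, by norm_num, ?_⟩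
  intro N n d d1 d2 δ hδ X X1 X2 hX1 hX2 hdX hd1 hd2 hd12 U hU hUspan Φ H
  obtain ⟨hδ0, hδ4⟩ := hδ
  have hδ1 : δ < 1 := by linarith
  set T := Matrix.toEuclideanLin Φ with hT
  have hb := bounds_from_hyp hδ0 hδ1 U hU hUspan Φ H
  set α := Real.sqrt (1 - δ) with hαdef
  set β := Real.sqrt (1 + δ) with hβdef
  have hα : 0 < α := Real.sqrt_pos.mpr (by linarith)
  have hβ : 0 < β := Real.sqrt_pos.mpr (by linarith)
  have hα2 : α ^ 2 = 1 - δ := Real.sq_sqrt (by linarith)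
  have hβ2 : β ^ 2 = 1 + δ := Real.sq_sqrt (by linarith)
  have hlow : ∀ x ∈ X, α * ‖x‖ ≤ ‖T x‖ := fun x hx => (hb x hx).1
  have hup : ∀ x ∈ X, ‖T x‖ ≤ β * ‖x‖ := fun x hx => (hb x hx).2
  have hinj : ∀ x ∈ X, T x = 0 → x = 0 := by
    intro x hx hTx
    have h := hlow x hx
    rw [hTx, norm_zero] at h
    have : ‖x‖ ≤ 0 := by nlinarith [norm_nonneg x]
    exact norm_le_zero_iff.mp this
  have frY1 : Module.finrank ℝ (X1.map T) = d1 := by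
    rw [finrank_map_eq' T X1 (fun x hx h => hinj x (hX1 hx) h), hd1]
  have frY2 : Module.finrank ℝ (X2.map T) = d2 := by
    rw [finrank_map_eq' T X2 (fun x hx h => hinj x (hX2 hx) h), hd2]
  obtain ⟨u, hu, huspan⟩ := exists_onb X1
  obtain ⟨w, hw, hwspan⟩ := exists_onb X2
  obtain ⟨y, hy, hyspan⟩ := exists_onb (X1.map T)
  obtain ⟨z, hz, hzspan⟩ := exists_onb (X2.map T)
  set a : ℝ := ∑ i, ‖u i - projE X2 (u i)‖ ^ 2 with ha
  set b : ℝ := ∑ j, ‖y j - projE (X2.map T) (y j)‖ ^ 2 with hbdef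
  have hanonneg : 0 ≤ a := Finset.sum_nonneg fun i _ => sq_nonneg _
  have hbnonneg : 0 ≤ b := Finset.sum_nonneg fun j _ => sq_nonneg _
  have hc1 : ((Module.finrank ℝ X1 : ℕ) : ℝ) = (d1 : ℝ) := by rw [hd1]
  have hc2 : ((Module.finrank ℝ X2 : ℕ) : ℝ) = (d2 : ℝ) := by rw [hd2]
  have hc1' : ((Module.finrank ℝ (X1.map T) : ℕ) : ℝ) = (d1 : ℝ) := by rw [frY1]
  have hc2' : ((Module.finrank ℝ (X2.map T) : ℕ) : ℝ) = (d2 : ℝ) := by rw [frY2]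
  have DX : Dsq X1 X2 = a + ((d2:ℝ) - d1)/2 := by
    have h := Dsq_eq hu huspan hw hwspan
    rw [← ha, hc1, hc2] at h
    exact h
  have DY : Dsq (X1.map T) (X2.map T) = b + ((d2:ℝ) - d1)/2 := by
    have h := Dsq_eq hy hyspan hz hzspan
    rw [← hbdef, hc1', hc2'] at h
    exact h
  -- forward comparison
  have K1 := key T hX1 hX2 hα hβ.le hlow hup hu huspan hy hyspan
  rw [hα2, hβ2] at K1
  -- reverse comparison via the inverse map
  obtain ⟨S, hS⟩ := exists_inverse T hα hlow
  have hmap : ∀ W : Submodule ℝ (EuclideanSpace ℝ (Fin N)), W ≤ X → (W.map T).map S = W := by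
    intro W hW
    apply le_antisymm
    · rintro x hx
      obtain ⟨v', hv', rfl⟩ := Submodule.mem_map.mp hx
      obtain ⟨v, hv, rfl⟩ := Submodule.mem_map.mp hv'
      rw [hS v (hW hv)]
      exact hv
    · intro v hv
      exact ⟨T v, Submodule.mem_map_of_mem hv, hS v (hW hv)⟩
  have hlowS : ∀ v ∈ X.map T, β⁻¹ * ‖v‖ ≤ ‖S v‖ := by
    rintro _ ⟨x, hx, rfl⟩
    rw [hS x hx]
    rw [inv_mul_le_iff₀ hβ]
    exact hup x hx
  have hupS : ∀ v ∈ X.map T, ‖S v‖ ≤ α⁻¹ * ‖v‖ := by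
    rintro _ ⟨x, hx, rfl⟩
    rw [hS x hx]
    rw [le_inv_mul_iff₀ hα]
    exact hlow x hx
  have huspan' : Submodule.span ℝ (Set.range u) = (X1.map T).map S := by
    rw [hmap X1 hX1, huspan]
  have K2 := key S (Submodule.map_mono hX1) (Submodule.map_mono hX2)
    (inv_pos.mpr hβ) (inv_nonneg.mpr hα.le) hlowS hupS hy hyspan hu huspan'
  rw [hmap X2 hX2] at K2
  rw [inv_pow, inv_pow, hα2, hβ2] at K2
  -- K2 : (1+δ)⁻¹ * a ≤ (1-δ)⁻¹ * b
  have h1δ : (0:ℝ) < 1 - δ := by linarith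
  have h2δ : (0:ℝ) < 1 + δ := by linarith
  have hB : (1-δ) * a ≤ (1+δ) * b := by
    have hmul := mul_le_mul_of_nonneg_left K2 (by positivity : (0:ℝ) ≤ (1+δ)*(1-δ))
    have e1 : (1+δ)*(1-δ)*((1+δ)⁻¹ * a) = (1-δ)*a := by field_simp
    have e2 : (1+δ)*(1-δ)*((1-δ)⁻¹ * b) = (1+δ)*b := by field_simp
    linarith [hmul, e1.ge, e2.le]
  have hA : (1-δ) * b ≤ (1+δ) * a := K1
  have hk : 0 ≤ ((d2:ℝ) - d1)/2 := by
    have : (d1:ℝ) ≤ d2 := Nat.cast_le.mpr hd12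
    linarith
  rw [DX, DY, abs_sub_le_iff]
  have hAδ := mul_le_mul_of_nonneg_left hA hδ0.le
  have hq1 : (0:ℝ) ≤ (1/4 - δ) * (δ * a) :=
    mul_nonneg (by linarith) (mul_nonneg hδ0.le hanonneg)
  have hq2 : (0:ℝ) ≤ (1/4 - δ) * (δ * b) :=
    mul_nonneg (by linarith) (mul_nonneg hδ0.le hbnonneg)
  have hq3 : (0:ℝ) ≤ δ * (((d2:ℝ) - d1)/2) := mul_nonneg hδ0.le hk
  have hq4 : (0:ℝ) ≤ δ * a := mul_nonneg hδ0.le hanonneg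
  have hq5 : (0:ℝ) ≤ δ * b := mul_nonneg hδ0.le hbnonneg
  constructor
  · nlinarith [hA, hAδ, hq1, hq2, hq3, hq4, hq5]
  · nlinarith [hB, hAδ, hq1, hq2, hq3, hq4, hq5]
end
end

section
/- Let X1 be a one-dimensional subspace spanned by a unit vector u1 and X2 a subspace with unit vector u2 achieving λ = ⟨u1,u2⟩ = aff(X2, X1), so that u1 = λ u2 + sqrt(1−λ²) u0 with u0 a unit vector orthogonal to X2. Then for any injective-on-span linear map Φ with Y2 = ΦX2, writing P = P_{Y2}: |aff(Y2, ΦX1)² − λ²| = (1−λ²)/||Φu1||² · | λ²(||Φu2||² − ||Φu0||²) + ||P Φu0||² + 2λ sqrt(1−λ²) ⟨Φu2, Φu0⟩ |. -/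
noncomputable section
open scoped RealInnerProductSpace Matrix

/-- One-dimensional affinity deviation formula under a linear map `Φ`. -/
theorem line_affinity_deviation {N n : ℕ}
    (X2 : Submodule ℝ (EuclideanSpace ℝ (Fin N)))
    (u1 u2 u0 : EuclideanSpace ℝ (Fin N)) (lam : ℝ)
    (hu1 : ‖u1‖ = 1) (hu2 : ‖u2‖ = 1) (hu2X : u2 ∈ X2) (hu0 : ‖u0‖ = 1)
    (hu0X : ∀ y ∈ X2, ⟪u0, y⟫ = 0)
    (hlam : lam = ⟪u1, u2⟫) (hlam0 : 0 < lam) (hlam1 : lam < 1)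
    (hdecomp : u1 = lam • u2 + Real.sqrt (1 - lam ^ 2) • u0)
    (Φ : EuclideanSpace ℝ (Fin N) →ₗ[ℝ] EuclideanSpace ℝ (Fin n))
    (hΦu1 : Φ u1 ≠ 0) :
    |(‖projE (X2.map Φ) (Φ u1)‖ / ‖Φ u1‖) ^ 2 - lam ^ 2|
      = (1 - lam ^ 2) / ‖Φ u1‖ ^ 2
        * |lam ^ 2 * (‖Φ u2‖ ^ 2 - ‖Φ u0‖ ^ 2)
            + ‖projE (X2.map Φ) (Φ u0)‖ ^ 2
            + 2 * lam * Real.sqrt (1 - lam ^ 2) * ⟪Φ u2, Φ u0⟫| := by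
  have hs2 : Real.sqrt (1 - lam ^ 2) ^ 2 = 1 - lam ^ 2 :=
    Real.sq_sqrt (by nlinarith)
  set s := Real.sqrt (1 - lam ^ 2) with hs
  set K := X2.map Φ with hK
  have hmem : Φ u2 ∈ K := Submodule.mem_map_of_mem hu2X
  have hPu2 : projE K (Φ u2) = Φ u2 := by
    simp [projE, K.starProjection_eq_self_iff.mpr hmem]
  have hPcross : ⟪Φ u2, projE K (Φ u0)⟫ = ⟪Φ u2, Φ u0⟫ := by
    have h := K.inner_starProjection_left_eq_right (Φ u2) (Φ u0)
    have h2 : K.starProjection (Φ u2) = Φ u2 := hPu2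
    rw [h2] at h
    simpa [projE] using h.symm
  have hΦ1 : Φ u1 = lam • Φ u2 + s • Φ u0 := by
    rw [hdecomp]; simp [map_add, map_smul]
  have hP1 : projE K (Φ u1) = lam • Φ u2 + s • projE K (Φ u0) := by
    rw [hΦ1, map_add, map_smul, map_smul, hPu2]
  have hn1 : ‖Φ u1‖ ^ 2
      = lam ^ 2 * ‖Φ u2‖ ^ 2 + 2 * (lam * s * ⟪Φ u2, Φ u0⟫) + s ^ 2 * ‖Φ u0‖ ^ 2 := by
    rw [hΦ1, norm_add_sq_real, norm_smul, norm_smul, real_inner_smul_left,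
      real_inner_smul_right]
    simp [Real.norm_eq_abs, mul_pow, sq_abs]; ring
  have hn2 : ‖projE K (Φ u1)‖ ^ 2
      = lam ^ 2 * ‖Φ u2‖ ^ 2 + 2 * (lam * s * ⟪Φ u2, Φ u0⟫)
        + s ^ 2 * ‖projE K (Φ u0)‖ ^ 2 := by
    rw [hP1, norm_add_sq_real, norm_smul, norm_smul, real_inner_smul_left,
      real_inner_smul_right, hPcross]
    simp [Real.norm_eq_abs, mul_pow, sq_abs]; ring
  have hT : (0:ℝ) < ‖Φ u1‖ ^ 2 := by have := norm_pos_iff.mpr hΦu1; positivity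
  have key : ‖projE K (Φ u1)‖ ^ 2 - lam ^ 2 * ‖Φ u1‖ ^ 2
      = (1 - lam ^ 2) * (lam ^ 2 * (‖Φ u2‖ ^ 2 - ‖Φ u0‖ ^ 2)
          + ‖projE K (Φ u0)‖ ^ 2 + 2 * lam * s * ⟪Φ u2, Φ u0⟫) := by
    rw [hn1, hn2]
    linear_combination (‖projE K (Φ u0)‖ ^ 2 - lam ^ 2 * ‖Φ u0‖ ^ 2) * hs2
  have h1l : (0:ℝ) < 1 - lam ^ 2 := by nlinarith
  rw [div_pow,
    show ‖projE K (Φ u1)‖ ^ 2 / ‖Φ u1‖ ^ 2 - lam ^ 2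
      = (‖projE K (Φ u1)‖ ^ 2 - lam ^ 2 * ‖Φ u1‖ ^ 2) / ‖Φ u1‖ ^ 2 from by
        field_simp,
    key, abs_div, abs_of_pos hT, abs_mul, abs_of_pos h1l]
  ring
end
end
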